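/- In an r=5 regular code of girth 6 in which no (4,8) absorbing set exists, every (5,b) absorbing set has b ≥ 9. Proof sketch: among the 10 unordered pairs of the 5 variable nodes, absence of (4,8) absorbing sets forces at least 2 pairs to be unconnected (else some 4-subset would have all 6 pairs connected), so at most 8 pairs share satisfied checks, giving at most 16 edges to satisfied checks out of 25, hence at least 9 edges to unsatisfied checks. -/

import Mathlib

open Finset

/-- Degree of check node `c` within the variable-node set `S` (neighborhoods given by `N`). -/
def chkDeg {V C : Type*} [DecidableEq C] (N : V → Finset C) (S : Finset V) (c : C) : ℕ :=
  (S.filter fun v => c ∈ N v).card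

/-- The unsatisfied (odd-degree) neighboring check nodes of the set `S`. -/
def oddChecks {V C : Type*} [DecidableEq C] (N : V → Finset C) (S : Finset V) : Finset C :=
  (S.biUnion N).filter fun c => chkDeg N S c % 2 = 1

/-- `S` is an absorbing set: each of its variable nodes has strictly fewer odd-degree
(unsatisfied) than even-degree (satisfied) neighboring check nodes. -/
def isAbsorbing {V C : Type*} [DecidableEq C] (N : V → Finset C) (S : Finset V) : Prop :=
  ∀ v ∈ S, ((N v).filter fun c => chkDeg N S c % 2 = 1).card <
    ((N v).filter fun c => chkDeg N S c % 2 = 0).card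

set_option linter.unusedSectionVars false

section Aux
variable {V C : Type*} [DecidableEq V] [DecidableEq C] (N : V → Finset C)

lemma one_le_chkDeg {B : Finset V} {c : C} (h : c ∈ B.biUnion N) : 1 ≤ chkDeg N B c := by
  rw [mem_biUnion] at h
  obtain ⟨v, hv, hc⟩ := h
  exact card_pos.mpr ⟨v, mem_filter.mpr ⟨hv, hc⟩⟩

lemma sum_chkDeg_filter (B : Finset V) (p : C → Prop) [DecidablePred p] :
    ∑ c ∈ (B.biUnion N).filter p, chkDeg N B c = ∑ v ∈ B, ((N v).filter p).card := by
  have h1 : ∀ v ∈ B, ((B.biUnion N).filter p).filter (fun c => c ∈ N v) = (N v).filter p := by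
    intro v hv
    ext c
    simp only [mem_filter, mem_biUnion]
    constructor
    · rintro ⟨⟨_, _⟩, h⟩; tauto
    · rintro ⟨h1, h2⟩; exact ⟨⟨⟨v, hv, h1⟩, h2⟩, h1⟩
  calc ∑ c ∈ (B.biUnion N).filter p, chkDeg N B c
      = ∑ c ∈ (B.biUnion N).filter p, ∑ v ∈ B, if c ∈ N v then 1 else 0 := by
        simp only [chkDeg, card_filter]
    _ = ∑ v ∈ B, ∑ c ∈ (B.biUnion N).filter p, if c ∈ N v then 1 else 0 := sum_comm
    _ = ∑ v ∈ B, ((N v).filter p).card := by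
        refine sum_congr rfl fun v hv => ?_
        rw [← h1 v hv, card_filter]

lemma sum_chkDeg_pairs (B : Finset V) (p : C → Prop) [DecidablePred p] :
    ∑ c ∈ (B.biUnion N).filter p, chkDeg N B c * (chkDeg N B c - 1)
      = ∑ q ∈ B.offDiag, ((N q.1 ∩ N q.2).filter p).card := by
  have h0 : ∀ c : C, (B.filter (fun v => c ∈ N v)).offDiag
      = B.offDiag.filter (fun q => c ∈ N q.1 ∧ c ∈ N q.2) := by
    intro c
    ext ⟨a, b⟩
    simp only [mem_offDiag, mem_filter]
    tauto
  have h1 : ∀ q ∈ B.offDiag, ((B.biUnion N).filter p).filter (fun c => c ∈ N q.1 ∧ c ∈ N q.2)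
      = (N q.1 ∩ N q.2).filter p := by
    intro q hq
    have hq1 : q.1 ∈ B := (mem_offDiag.mp hq).1
    ext c
    simp only [mem_filter, mem_biUnion, mem_inter]
    constructor
    · rintro ⟨⟨_, _⟩, h⟩; tauto
    · rintro ⟨⟨ha, hb⟩, hp⟩; exact ⟨⟨⟨q.1, hq1, ha⟩, hp⟩, ha, hb⟩
  calc ∑ c ∈ (B.biUnion N).filter p, chkDeg N B c * (chkDeg N B c - 1)
      = ∑ c ∈ (B.biUnion N).filter p,
          (B.offDiag.filter (fun q => c ∈ N q.1 ∧ c ∈ N q.2)).card := by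
        refine sum_congr rfl fun c _ => ?_
        rw [← h0, offDiag_card, chkDeg, Nat.mul_sub_one]
    _ = ∑ c ∈ (B.biUnion N).filter p, ∑ q ∈ B.offDiag,
          if c ∈ N q.1 ∧ c ∈ N q.2 then 1 else 0 := by
        simp only [card_filter]
    _ = ∑ q ∈ B.offDiag, ∑ c ∈ (B.biUnion N).filter p,
          if c ∈ N q.1 ∧ c ∈ N q.2 then 1 else 0 := sum_comm
    _ = ∑ q ∈ B.offDiag, ((N q.1 ∩ N q.2).filter p).card := by
        refine sum_congr rfl fun q hq => ?_
        rw [← h1 q hq, card_filter]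

lemma parts (B : Finset V) (v : V) :
    ((N v).filter (fun c => chkDeg N B c % 2 = 1)).card
      + ((N v).filter (fun c => chkDeg N B c % 2 = 0)).card = (N v).card := by
  have h := card_filter_add_card_filter_not (s := N v)
    (p := fun c => chkDeg N B c % 2 = 1)
  have h2 : (N v).filter (fun c => ¬ chkDeg N B c % 2 = 1)
      = (N v).filter (fun c => chkDeg N B c % 2 = 0) := by
    apply filter_congr
    intro c _
    constructor <;> omega
  rw [h2] at h
  omega

end Aux

/-- In an `r = 5` regular code of girth 6 with no (4,8) absorbing set,
every `(5,b)` absorbing set has `b ≥ 9`. -/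
theorem five_b_absorbing_ge_nine {V C : Type*} [DecidableEq V] [DecidableEq C]
    (N : V → Finset C)
    (hreg : ∀ v, (N v).card = 5)
    (hgirth : ∀ v w : V, v ≠ w → (N v ∩ N w).card ≤ 1)
    (h48 : ¬ ∃ T : Finset V, T.card = 4 ∧ isAbsorbing N T ∧ (oddChecks N T).card = 8)
    (S : Finset V) (hS : S.card = 5) (habs : isAbsorbing N S) :
    9 ≤ (oddChecks N S).card := by
  classical
  set d : C → ℕ := chkDeg N S with hdDef
  set A : Finset C := S.biUnion N with hADef
  have hdle : ∀ c, d c ≤ 5 := by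
    intro c
    have := card_filter_le S (fun v => c ∈ N v)
    rw [hS] at this
    exact this
  have hdge : ∀ c ∈ A, 1 ≤ d c := fun c hc => one_le_chkDeg N hc
  -- per-vertex counts for S
  have heven3 : ∀ v ∈ S, 3 ≤ ((N v).filter (fun c => d c % 2 = 0)).card := by
    intro v hv
    have h1 := habs v hv
    have h2 := parts N S v
    rw [hreg v] at h2
    simp only [← hdDef] at h1 h2
    omega
  -- edge count
  have hsum25 : ∑ c ∈ A, d c = 25 := by
    have h := sum_chkDeg_filter N S (fun _ => True)
    simp only [filter_true_of_mem (fun _ _ => trivial)] at h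
    rw [hADef, hdDef, h]
    simp [hreg, hS]
  -- pair bound
  have hpairsum : ∀ (p : C → Prop) [DecidablePred p],
      ∑ c ∈ A.filter p, d c * (d c - 1) = ∑ q ∈ S.offDiag, ((N q.1 ∩ N q.2).filter p).card :=
    fun p _ => sum_chkDeg_pairs N S p
  have hoffcard : (S.offDiag).card = 20 := by rw [offDiag_card, hS]
  have hpairs : ∑ c ∈ A, d c * (d c - 1) ≤ 20 := by
    have h := hpairsum (fun _ => True)
    simp only [filter_true_of_mem (fun _ _ => trivial)] at h
    rw [h]
    calc ∑ q ∈ S.offDiag, (N q.1 ∩ N q.2).card ≤ ∑ _q ∈ S.offDiag, 1 := by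
          refine sum_le_sum fun q hq => ?_
          exact hgirth q.1 q.2 (mem_offDiag.mp hq).2.2
      _ = 20 := by rw [sum_const, hoffcard, smul_eq_mul, mul_one]
  -- even checks sum
  have hsumE : 15 ≤ ∑ c ∈ A.filter (fun c => d c % 2 = 0), d c := by
    rw [hADef, hdDef, sum_chkDeg_filter]
    calc (15 : ℕ) = ∑ _v ∈ S, 3 := by simp [sum_const, hS]
      _ ≤ _ := by
        refine sum_le_sum fun v hv => ?_
        have := heven3 v hv
        simpa [hdDef] using this
  -- split A into odd and even checks
  set O : Finset C := A.filter (fun c => d c % 2 = 1) with hODef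
  set E : Finset C := A.filter (fun c => d c % 2 = 0) with hEDef
  have hOE : ∀ f : C → ℕ, ∑ c ∈ E, f c + ∑ c ∈ O, f c = ∑ c ∈ A, f c := by
    intro f
    rw [hODef, hEDef]
    have : A.filter (fun c => d c % 2 = 1) = A.filter (fun c => ¬ d c % 2 = 0) := by
      apply filter_congr; intro c _; constructor <;> omega
    rw [this]
    exact sum_filter_add_sum_filter_not A _ f
  -- even checks have degree 2 or 4
  set E2 : Finset C := A.filter (fun c => d c = 2) with hE2Def
  set E4 : Finset C := A.filter (fun c => d c = 4) with hE4Def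
  have hEsplit : E = E2 ∪ E4 := by
    rw [hEDef, hE2Def, hE4Def, ← filter_or]
    apply filter_congr
    intro c hc
    have h1 := hdge c hc
    have h2 := hdle c
    constructor <;> omega
  have hE24disj : Disjoint E2 E4 := by
    rw [disjoint_left]
    intro c h2 h4
    have a2 := (mem_filter.mp h2).2
    have a4 := (mem_filter.mp h4).2
    omega
  have hsumE_eq : ∑ c ∈ E, d c = 2 * E2.card + 4 * E4.card := by
    rw [hEsplit, sum_union hE24disj]
    congr 1
    · rw [hE2Def]
      rw [sum_congr rfl (fun c hc => (mem_filter.mp hc).2)]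
      rw [sum_const, smul_eq_mul, mul_comm]
    · rw [hE4Def]
      rw [sum_congr rfl (fun c hc => (mem_filter.mp hc).2)]
      rw [sum_const, smul_eq_mul, mul_comm]
  have hsumEp_eq : ∑ c ∈ E, d c * (d c - 1) = 2 * E2.card + 12 * E4.card := by
    rw [hEsplit, sum_union hE24disj]
    congr 1
    · rw [hE2Def]
      rw [sum_congr rfl (fun c hc => by rw [(mem_filter.mp hc).2])]
      rw [sum_const, smul_eq_mul, mul_comm]
    · rw [hE4Def]
      rw [sum_congr rfl (fun c hc => by rw [(mem_filter.mp hc).2])]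
      rw [sum_const, smul_eq_mul, mul_comm]
  have hOpairs : ∑ c ∈ O, d c * (d c - 1) ≤ 20 - ∑ c ∈ E, d c * (d c - 1) := by
    have := hOE (fun c => d c * (d c - 1))
    omega
  -- arithmetic: E4 empty, E2.card ≥ 8
  have hE40 : E4.card = 0 ∧ 8 ≤ E2.card ∧ E2.card ≤ 10 := by
    have h1 := hsumE
    have h2 : ∑ c ∈ E, d c * (d c - 1) ≤ 20 := by
      have := hOE (fun c => d c * (d c - 1))
      omega
    rw [hsumE_eq] at h1
    rw [hsumEp_eq] at h2
    omega
  obtain ⟨hE4z, hE2ge8, hE2le10⟩ := hE40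
  -- all odd checks have degree 1
  have hOdeg1 : ∀ c ∈ O, d c = 1 := by
    intro c hc
    have hcA : c ∈ A := mem_of_mem_filter c hc
    have hodd : d c % 2 = 1 := (mem_filter.mp hc).2
    by_contra hne
    have h3 : 3 ≤ d c := by have := hdge c hcA; omega
    have hterm : 6 ≤ d c * (d c - 1) :=
      calc 6 = 3 * 2 := rfl
        _ ≤ d c * (d c - 1) := Nat.mul_le_mul h3 (by omega)
    have hle : d c * (d c - 1) ≤ ∑ x ∈ O, d x * (d x - 1) :=
      single_le_sum (f := fun x => d x * (d x - 1)) (fun i _ => Nat.zero_le _) hc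
    have : ∑ c ∈ E, d c * (d c - 1) ≥ 2 * E2.card := by rw [hsumEp_eq]; omega
    omega
  have hOcard : O.card = ∑ c ∈ O, d c := by
    rw [sum_congr rfl hOdeg1, sum_const, smul_eq_mul, mul_one]
  have hOval : O.card = 25 - 2 * E2.card := by
    have := hOE d
    rw [hsum25] at this
    rw [hOcard]
    rw [hsumE_eq] at this
    omega
  -- goal restated
  have hgoal : (oddChecks N S).card = O.card := rfl
  rw [hgoal, hOval]
  -- suffices to show E2.card ≤ 8
  by_contra hcon
  have hE2ge9 : 9 ≤ E2.card := by omega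
  -- connected pairs
  have hQ := hpairsum (fun c => d c = 2)
  have hQL : ∑ c ∈ A.filter (fun c => d c = 2), d c * (d c - 1) = 2 * E2.card := by
    rw [← hE2Def]
    rw [sum_congr rfl (fun c hc => by rw [(mem_filter.mp hc).2])]
    rw [sum_const, smul_eq_mul, mul_comm]
  rw [hQL] at hQ
  -- each pair term is at most 1
  have htle1 : ∀ q ∈ S.offDiag, ((N q.1 ∩ N q.2).filter (fun c => d c = 2)).card ≤ 1 := by
    intro q hq
    calc ((N q.1 ∩ N q.2).filter (fun c => d c = 2)).card ≤ (N q.1 ∩ N q.2).card :=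
          card_filter_le _ _
      _ ≤ 1 := hgirth q.1 q.2 (mem_offDiag.mp hq).2.2
  set P : Finset (V × V) :=
    S.offDiag.filter (fun q => 0 < ((N q.1 ∩ N q.2).filter (fun c => d c = 2)).card)
    with hPDef
  have hPcard : 18 ≤ P.card := by
    have hsplit := sum_filter_add_sum_filter_not S.offDiag
      (fun q => 0 < ((N q.1 ∩ N q.2).filter (fun c => d c = 2)).card)
      (fun q => ((N q.1 ∩ N q.2).filter (fun c => d c = 2)).card)
    have hz : ∑ q ∈ S.offDiag.filter
        (fun q => ¬ 0 < ((N q.1 ∩ N q.2).filter (fun c => d c = 2)).card),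
        ((N q.1 ∩ N q.2).filter (fun c => d c = 2)).card = 0 := by
      refine sum_eq_zero fun q hq => ?_
      have := (mem_filter.mp hq).2
      omega
    rw [← hPDef] at hsplit
    have hPle : ∑ q ∈ P, ((N q.1 ∩ N q.2).filter (fun c => d c = 2)).card ≤ P.card := by
      calc ∑ q ∈ P, ((N q.1 ∩ N q.2).filter (fun c => d c = 2)).card
          ≤ ∑ _q ∈ P, 1 := by
            refine sum_le_sum fun q hq => ?_
            exact htle1 q (mem_of_mem_filter q hq)
        _ = P.card := by rw [sum_const, smul_eq_mul, mul_one]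
    omega
  have hPsub : P ⊆ S.offDiag := filter_subset _ _
  set U : Finset (V × V) := S.offDiag \ P with hUDef
  have hUcard : U.card ≤ 2 := by
    rw [hUDef, card_sdiff_of_subset hPsub, hoffcard]
    omega
  have hUsym : ∀ a b : V, (a, b) ∈ U → (b, a) ∈ U := by
    intro a b hab
    rw [hUDef, mem_sdiff] at hab ⊢
    obtain ⟨hoff, hnP⟩ := hab
    rw [mem_offDiag] at hoff
    refine ⟨mem_offDiag.mpr ⟨hoff.2.1, hoff.1, fun h => hoff.2.2 h.symm⟩, fun hP => ?_⟩
    apply hnP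
    rw [hPDef, mem_filter] at hP ⊢
    refine ⟨mem_offDiag.mpr ⟨hoff.1, hoff.2.1, hoff.2.2⟩, ?_⟩
    have h2 := hP.2
    simp only [inter_comm (N b) (N a)] at h2
    exact h2
  -- find a vertex v0 covering all unconnected pairs
  obtain ⟨v0, hv0S, hv0⟩ : ∃ v0 ∈ S, ∀ q ∈ U, q.1 = v0 ∨ q.2 = v0 := by
    rcases U.eq_empty_or_nonempty with hUe | ⟨⟨a, b⟩, hab⟩
    · have hSne : S.Nonempty := card_pos.mp (by omega)
      exact ⟨hSne.choose, hSne.choose_spec, fun q hq => by rw [hUe] at hq; simp at hq⟩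
    · have hoff : (a, b) ∈ S.offDiag := (mem_sdiff.mp (by rwa [hUDef] at hab)).1
      have hne : a ≠ b := (mem_offDiag.mp hoff).2.2
      have hba := hUsym a b hab
      have hpne : ((a, b) : V × V) ≠ (b, a) := fun h => hne (congrArg Prod.fst h)
      have hsub : ({(a, b), (b, a)} : Finset (V × V)) ⊆ U := by
        intro q hq
        rcases mem_insert.mp hq with h | h
        · rwa [h]
        · rw [mem_singleton.mp h]; exact hba
      have hc2 : ({(a, b), (b, a)} : Finset (V × V)).card = 2 := card_pair hpne
      have hUeq : ({(a, b), (b, a)} : Finset (V × V)) = U :=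
        eq_of_subset_of_card_le hsub (by omega)
      refine ⟨a, (mem_offDiag.mp hoff).1, fun q hq => ?_⟩
      rw [← hUeq] at hq
      rcases mem_insert.mp hq with h | h
      · left; rw [h]
      · right; rw [mem_singleton.mp h]
  set T : Finset V := S.erase v0 with hTDef
  have hTsub : T ⊆ S := erase_subset _ _
  have hTcard : T.card = 4 := by rw [hTDef, card_erase_of_mem hv0S, hS]
  have hconn : ∀ v ∈ T, ∀ w ∈ T, v ≠ w → ∃ c, c ∈ N v ∧ c ∈ N w ∧ d c = 2 := by
    intro v hv w hw hvw
    have hvS : v ∈ S := hTsub hv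
    have hwS : w ∈ S := hTsub hw
    have hoff : (v, w) ∈ S.offDiag := mem_offDiag.mpr ⟨hvS, hwS, hvw⟩
    by_cases hP : (v, w) ∈ P
    · rw [hPDef, mem_filter] at hP
      obtain ⟨c, hc⟩ := card_pos.mp hP.2
      rw [mem_filter, mem_inter] at hc
      exact ⟨c, hc.1.1, hc.1.2, hc.2⟩
    · exfalso
      have hU : (v, w) ∈ U := by rw [hUDef, mem_sdiff]; exact ⟨hoff, hP⟩
      rcases hv0 _ hU with h | h
      · exact (mem_erase.mp hv).1 h
      · exact (mem_erase.mp hw).1 h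
  have hdTle : ∀ c, chkDeg N T c ≤ d c := by
    intro c
    rw [hdDef]
    exact card_le_card (filter_subset_filter _ hTsub)
  have key1 : ∀ v ∈ T, ∀ w ∈ T, v ≠ w → ∀ c, c ∈ N v → c ∈ N w → chkDeg N T c = 2 := by
    intro v hv w hw hvw c hcv hcw
    obtain ⟨c', h1, h2, h3⟩ := hconn v hv w hw hvw
    have hcc : c = c' := by
      have hle1 := hgirth v w hvw
      exact card_le_one.mp hle1 c (mem_inter.mpr ⟨hcv, hcw⟩) c' (mem_inter.mpr ⟨h1, h2⟩)
    subst hcc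
    have hub : chkDeg N T c ≤ 2 := le_trans (hdTle c) (le_of_eq h3)
    have hlb : 2 ≤ chkDeg N T c := by
      have hsub2 : ({v, w} : Finset V) ⊆ T.filter (fun u => c ∈ N u) := by
        intro u hu
        rcases mem_insert.mp hu with h | h
        · rw [h]; exact mem_filter.mpr ⟨hv, hcv⟩
        · rw [mem_singleton.mp h]; exact mem_filter.mpr ⟨hw, hcw⟩
      calc 2 = ({v, w} : Finset V).card := (card_pair hvw).symm
        _ ≤ _ := card_le_card hsub2
    omega
  have key2 : ∀ c, 2 ≤ chkDeg N T c → chkDeg N T c = 2 := by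
    intro c h2
    obtain ⟨v, hv, w, hw, hvw⟩ := one_lt_card.mp (h2 : 1 < (T.filter (fun v => c ∈ N v)).card)
    rw [mem_filter] at hv hw
    exact key1 v hv.1 w hw.1 hvw c hv.2 hw.2
  have hEvFil : ∀ v ∈ T, (N v).filter (fun c => chkDeg N T c % 2 = 0)
      = (T.erase v).biUnion (fun w => N v ∩ N w) := by
    intro v hv
    ext c
    rw [mem_filter, mem_biUnion]
    constructor
    · rintro ⟨hcv, heven⟩
      have h1 : 1 ≤ chkDeg N T c :=
        card_pos.mpr ⟨v, mem_filter.mpr ⟨hv, hcv⟩⟩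
      have h2 : chkDeg N T c = 2 := key2 c (by omega)
      have hvmem : v ∈ T.filter (fun u => c ∈ N u) := mem_filter.mpr ⟨hv, hcv⟩
      have hec : ((T.filter (fun u => c ∈ N u)).erase v).card = 1 := by
        rw [card_erase_of_mem hvmem]
        unfold chkDeg at h2
        omega
      obtain ⟨w, hw⟩ := card_pos.mp (by omega : 0 < ((T.filter (fun u => c ∈ N u)).erase v).card)
      rw [mem_erase, mem_filter] at hw
      exact ⟨w, mem_erase.mpr ⟨hw.1, hw.2.1⟩, mem_inter.mpr ⟨hcv, hw.2.2⟩⟩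
    · rintro ⟨w, hw, hc⟩
      rw [mem_erase] at hw
      rw [mem_inter] at hc
      have := key1 v hv w hw.2 (fun h => hw.1 h.symm) c hc.1 hc.2
      exact ⟨hc.1, by omega⟩
  have hEv3 : ∀ v ∈ T, ((N v).filter (fun c => chkDeg N T c % 2 = 0)).card = 3 := by
    intro v hv
    rw [hEvFil v hv]
    rw [card_biUnion]
    · have hone : ∀ w ∈ T.erase v, (N v ∩ N w).card = 1 := by
        intro w hw
        rw [mem_erase] at hw
        have hle := hgirth v w (fun h => hw.1 h.symm)
        obtain ⟨c, h1, h2, _⟩ := hconn v hv w hw.2 (fun h => hw.1 h.symm)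
        have : 0 < (N v ∩ N w).card := card_pos.mpr ⟨c, mem_inter.mpr ⟨h1, h2⟩⟩
        omega
      rw [sum_congr rfl hone, sum_const, card_erase_of_mem hv, hTcard, smul_eq_mul, mul_one]
    · intro w hw w' hw' hww'
      rw [mem_coe, mem_erase] at hw hw'
      rw [Function.onFun, disjoint_left]
      intro c hc hc'
      rw [mem_inter] at hc hc'
      have h2 := key1 v hv w hw.2 (fun h => hw.1 h.symm) c hc.1 hc.2
      have hsub3 : ({v, w, w'} : Finset V) ⊆ T.filter (fun u => c ∈ N u) := by
        intro u hu
        rcases mem_insert.mp hu with h | h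
        · rw [h]; exact mem_filter.mpr ⟨hv, hc.1⟩
        rcases mem_insert.mp h with h' | h'
        · rw [h']; exact mem_filter.mpr ⟨hw.2, hc.2⟩
        · rw [mem_singleton.mp h']; exact mem_filter.mpr ⟨hw'.2, hc'.2⟩
      have hc3 : ({v, w, w'} : Finset V).card = 3 := by
        rw [card_insert_of_notMem, card_insert_of_notMem, card_singleton]
        · simp only [mem_singleton]; exact hww'
        · simp only [mem_insert, mem_singleton]
          push_neg
          exact ⟨fun h => hw.1 h.symm, fun h => hw'.1 h.symm⟩
      have := card_le_card hsub3
      unfold chkDeg at h2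
      omega
  have hOddT2 : ∀ v ∈ T, ((N v).filter (fun c => chkDeg N T c % 2 = 1)).card = 2 := by
    intro v hv
    have h := parts N T v
    rw [hreg v, hEv3 v hv] at h
    omega
  have habsT : isAbsorbing N T := by
    intro v hv
    rw [hOddT2 v hv, hEv3 v hv]
    omega
  have hoddTcard : (oddChecks N T).card = 8 := by
    have hodd1 : ∀ c ∈ (T.biUnion N).filter (fun c => chkDeg N T c % 2 = 1),
        chkDeg N T c = 1 := by
      intro c hc
      rw [mem_filter] at hc
      have h1 : 1 ≤ chkDeg N T c := one_le_chkDeg N hc.1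
      by_contra hne
      have h2 := key2 c (by omega)
      omega
    have hsum := sum_chkDeg_filter N T (fun c => chkDeg N T c % 2 = 1)
    rw [sum_congr rfl hOddT2, sum_const, hTcard, smul_eq_mul] at hsum
    have hcard : ((T.biUnion N).filter (fun c => chkDeg N T c % 2 = 1)).card
        = ∑ c ∈ (T.biUnion N).filter (fun c => chkDeg N T c % 2 = 1), chkDeg N T c := by
      rw [sum_congr rfl hodd1, sum_const, smul_eq_mul, mul_one]
    show ((T.biUnion N).filter (fun c => chkDeg N T c % 2 = 1)).card = 8
    omega
  exact h48 ⟨T, hTcard, habsT, hoddTcard⟩
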